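/- Let I ⊆ ℝ^X (for finite index set X) and O ⊆ ℝ^(A × X) be convex polytopes (convex hulls of finite vertex sets V_I and V_O respectively). Define R = {r : A × X → ℝ | r is a finite convex combination of elements of the form (a, x) ↦ p(x)·q(a, x) with p ∈ I, q ∈ O}. Then R equals the convex hull of the finite set {(a, x) ↦ v(x)·w(a, x) | v ∈ V_I, w ∈ V_O}; in particular R is a convex polytope. -/
import Mathlib

theorem stmt_5 {X A : Type} [Fintype X] [Fintype A] [DecidableEq X] [DecidableEq A]
    (VI : Finset (X → ℝ)) (VO : Finset (A × X → ℝ)) :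
    convexHull ℝ {r : A × X → ℝ |
        ∃ p ∈ convexHull ℝ (VI : Set (X → ℝ)),
        ∃ q ∈ convexHull ℝ (VO : Set (A × X → ℝ)),
          r = fun ax => p ax.2 * q ax} =
      convexHull ℝ {r : A × X → ℝ |
        ∃ v ∈ VI, ∃ w ∈ VO, r = fun ax => v ax.2 * w ax} := by
  apply Set.Subset.antisymm
  · apply convexHull_min _ (convex_convexHull ℝ _)
    rintro r ⟨p, hp, q, hq, rfl⟩
    -- linear map in q for fixed p
    have lin_p : IsLinearMap ℝ (fun q : A × X → ℝ => fun ax => p ax.2 * q ax) := by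
      constructor
      · intro a b; funext ax; simp [Pi.add_apply, mul_add]
      · intro c a; funext ax; simp [Pi.smul_apply, smul_eq_mul]; ring
    have h1 : (fun ax => p ax.2 * q ax) ∈
        convexHull ℝ ((fun q : A × X → ℝ => fun ax => p ax.2 * q ax) '' VO) := by
      rw [← lin_p.image_convexHull]
      exact Set.mem_image_of_mem _ hq
    refine convexHull_min ?_ (convex_convexHull ℝ _) h1
    rintro r ⟨w, hw, rfl⟩
    have lin_w : IsLinearMap ℝ (fun p : X → ℝ => fun ax : A × X => p ax.2 * w ax) := by
      constructor
      · intro a b; funext ax; simp [Pi.add_apply, add_mul]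
      · intro c a; funext ax; simp [Pi.smul_apply, smul_eq_mul]; ring
    have h2 : (fun ax : A × X => p ax.2 * w ax) ∈
        convexHull ℝ ((fun p : X → ℝ => fun ax : A × X => p ax.2 * w ax) '' VI) := by
      rw [← lin_w.image_convexHull]
      exact Set.mem_image_of_mem _ hp
    refine convexHull_min ?_ (convex_convexHull ℝ _) h2
    rintro r ⟨v, hv, rfl⟩
    exact subset_convexHull ℝ _ ⟨v, hv, w, hw, rfl⟩
  · apply convexHull_mono
    rintro r ⟨v, hv, w, hw, rfl⟩
    exact ⟨v, subset_convexHull ℝ _ hv, w, subset_convexHull ℝ _ hw, rfl⟩
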